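/- Fix n ≥ 1 and nonnegative integers s(2),…,s(n). The s-weak order is join-semidistributive and meet-semidistributive: for s-inversion functions x, y, z, if an element w is simultaneously a least upper bound of {x, y} and a least upper bound of {x, z} (within the componentwise-ordered set of s-inversion functions), then w is also a least upper bound of {x, m} where m is the greatest lower bound of {y, z}; and the dual statement holds with least upper bounds and greatest lower bounds exchanged. -/

import Mathlib

/-- `g` is an `s`-inversion function. -/
def IsSInvFun (n : ℕ) (s : Fin n → ℕ) (g : Fin n → Fin n → ℕ) : Prop :=
  (∀ a c : Fin n, a < c → g c a ≤ s c) ∧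
  (∀ a b c : Fin n, a < b → b < c → 0 < g b a → g c b ≤ g c a) ∧
  (∀ a b c : Fin n, a < b → b < c → g b a < s b → g c a ≤ g c b)

/-- The componentwise order on `s`-inversion functions (the `s`-weak order). -/
def SLe (n : ℕ) (g h : Fin n → Fin n → ℕ) : Prop :=
  ∀ a c : Fin n, a < c → g c a ≤ h c a

/-- `w` is a least upper bound of `{a, b}` within the componentwise-ordered
set of `s`-inversion functions. -/
def IsSLub (n : ℕ) (s : Fin n → ℕ) (w a b : Fin n → Fin n → ℕ) : Prop :=
  IsSInvFun n s w ∧ SLe n a w ∧ SLe n b w ∧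
    ∀ u : Fin n → Fin n → ℕ, IsSInvFun n s u → SLe n a u → SLe n b u →
      SLe n w u

/-- `w` is a greatest lower bound of `{a, b}` within the componentwise-ordered
set of `s`-inversion functions. -/
def IsSGlb (n : ℕ) (s : Fin n → ℕ) (w a b : Fin n → Fin n → ℕ) : Prop :=
  IsSInvFun n s w ∧ SLe n w a ∧ SLe n w b ∧
    ∀ u : Fin n → Fin n → ℕ, IsSInvFun n s u → SLe n u a → SLe n u b →
      SLe n u w

namespace SWeak

open scoped Classical

variable {n : ℕ}

abbrev maxf (x y : Fin n → Fin n → ℕ) : Fin n → Fin n → ℕ := fun c a => max (x c a) (y c a)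
abbrev minf (x y : Fin n → Fin n → ℕ) : Fin n → Fin n → ℕ := fun c a => min (x c a) (y c a)

def Stp (θ : Fin n → Fin n → ℕ) (p q : Fin n) : Prop := p < q ∧ 0 < θ q p
def Rch (θ : Fin n → Fin n → ℕ) : Fin n → Fin n → Prop := Relation.ReflTransGen (Stp θ)

def PStp (s : Fin n → ℕ) (θ : Fin n → Fin n → ℕ) (p q : Fin n) : Prop := p < q ∧ θ q p < s q
def PRch (s : Fin n → ℕ) (θ : Fin n → Fin n → ℕ) : Fin n → Fin n → Prop :=
  Relation.ReflTransGen (PStp s θ)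

noncomputable def tc (θ : Fin n → Fin n → ℕ) (c a : Fin n) : ℕ :=
  Finset.univ.sup (fun b => if Rch θ a b ∧ b < c then θ c b else 0)

noncomputable def pc (s : Fin n → ℕ) (θ : Fin n → Fin n → ℕ) (c a : Fin n) : ℕ :=
  Finset.inf' Finset.univ (show (Finset.univ : Finset (Fin n)).Nonempty from ⟨a, Finset.mem_univ a⟩)
    (fun b => if PRch s θ a b ∧ b < c then θ c b else θ c a)

lemma rtg_le {r : Fin n → Fin n → Prop} (hr : ∀ p q, r p q → p < q) {a b : Fin n}
    (h : Relation.ReflTransGen r a b) : a ≤ b := by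
  induction h with
  | refl => exact le_rfl
  | @tail p q h1 h2 ih => exact ih.trans (hr _ _ h2).le

lemma rtg_split {r : Fin n → Fin n → Prop} {a e b : Fin n}
    (h : Relation.ReflTransGen r a e) (hbe : b ≤ e) (hab : a < b) :
    ∃ p q, Relation.ReflTransGen r a p ∧ p < b ∧ r p q ∧ b ≤ q ∧
      Relation.ReflTransGen r q e := by
  revert hab
  induction h using Relation.ReflTransGen.head_induction_on with
  | refl => intro hab; exact absurd hbe (not_le.mpr hab)
  | @head a' c' hstep hrest ih =>
    intro hab
    by_cases hbq : b ≤ c'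
    · exact ⟨a', c', Relation.ReflTransGen.refl, hab, hstep, hbq, hrest⟩
    · obtain ⟨p, q, h1, h2, h3, h4, h5⟩ := ih (not_le.mp hbq)
      exact ⟨p, q, Relation.ReflTransGen.head hstep h1, h2, h3, h4, h5⟩

lemma tc_le_iff {θ : Fin n → Fin n → ℕ} {c a : Fin n} {M : ℕ} :
    tc θ c a ≤ M ↔ ∀ b, Rch θ a b → b < c → θ c b ≤ M := by
  unfold tc
  rw [Finset.sup_le_iff]
  constructor
  · intro H b h1 h2
    have := H b (Finset.mem_univ b)
    rwa [if_pos ⟨h1, h2⟩] at this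
  · intro H b _
    split_ifs with h
    · exact H b h.1 h.2
    · exact Nat.zero_le M

lemma le_tc_of_rch {θ : Fin n → Fin n → ℕ} {c a b : Fin n}
    (h : Rch θ a b) (hbc : b < c) : θ c b ≤ tc θ c a := by
  have := Finset.le_sup (f := fun b => if Rch θ a b ∧ b < c then θ c b else 0)
    (Finset.mem_univ b)
  rwa [if_pos ⟨h, hbc⟩] at this

lemma le_tc {θ : Fin n → Fin n → ℕ} {c a : Fin n} (hac : a < c) : θ c a ≤ tc θ c a :=
  le_tc_of_rch Relation.ReflTransGen.refl hac

lemma exists_of_lt_tc {θ : Fin n → Fin n → ℕ} {c a : Fin n} {M : ℕ}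
    (h : M < tc θ c a) : ∃ b, Rch θ a b ∧ b < c ∧ M < θ c b := by
  by_contra h'
  push_neg at h'
  exact absurd (tc_le_iff.mpr h') (not_le.mpr h)

lemma tc_mono {θ : Fin n → Fin n → ℕ} {c a b : Fin n} (h : Rch θ a b) :
    tc θ c b ≤ tc θ c a :=
  tc_le_iff.mpr (fun e he hec => le_tc_of_rch (h.trans he) hec)

lemma le_pc_iff {s : Fin n → ℕ} {θ : Fin n → Fin n → ℕ} {c a : Fin n} {M : ℕ}
    (hac : a < c) :
    M ≤ pc s θ c a ↔ ∀ b, PRch s θ a b → b < c → M ≤ θ c b := by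
  unfold pc
  rw [Finset.le_inf'_iff]
  constructor
  · intro H b h1 h2
    have := H b (Finset.mem_univ b)
    rwa [if_pos ⟨h1, h2⟩] at this
  · intro H b _
    split_ifs with h
    · exact H b h.1 h.2
    · exact H a Relation.ReflTransGen.refl hac

lemma pc_le_of_prch {s : Fin n → ℕ} {θ : Fin n → Fin n → ℕ} {c a b : Fin n}
    (h : PRch s θ a b) (hbc : b < c) : pc s θ c a ≤ θ c b := by
  have := Finset.inf'_le (f := fun b => if PRch s θ a b ∧ b < c then θ c b else θ c a)
    (Finset.mem_univ b)
  rwa [if_pos ⟨h, hbc⟩] at this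

lemma pc_le {s : Fin n → ℕ} {θ : Fin n → Fin n → ℕ} {c a : Fin n} (hac : a < c) :
    pc s θ c a ≤ θ c a :=
  pc_le_of_prch Relation.ReflTransGen.refl hac

lemma exists_of_pc_lt {s : Fin n → ℕ} {θ : Fin n → Fin n → ℕ} {c a : Fin n} {M : ℕ}
    (h : pc s θ c a < M) (hac : a < c) :
    ∃ b, PRch s θ a b ∧ b < c ∧ θ c b < M := by
  by_contra h'
  push_neg at h'
  exact absurd ((le_pc_iff hac).mpr h') (not_le.mpr h)


lemma tc_inv {s : Fin n → ℕ} {x y : Fin n → Fin n → ℕ}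
    (hx : IsSInvFun n s x) (hy : IsSInvFun n s y) :
    IsSInvFun n s (tc (maxf x y)) := by
  refine ⟨?_, ?_, ?_⟩
  · intro a c hac
    exact tc_le_iff.mpr (fun b _ hbc => max_le (hx.1 b c hbc) (hy.1 b c hbc))
  · intro a b c hab hbc hpos
    obtain ⟨b'', hr, hb'', hθ⟩ := exists_of_lt_tc hpos
    exact tc_mono (hr.tail ⟨hb'', hθ⟩)
  · intro a b c hab hbc hlt
    apply tc_le_iff.mpr
    intro e hre hec
    by_cases heb : e < b
    · have h1 : maxf x y b e ≤ tc (maxf x y) b a := le_tc_of_rch hre heb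
      have hx1 : x b e < s b := lt_of_le_of_lt (le_trans (le_max_left _ _) h1) hlt
      have hy1 : y b e < s b := lt_of_le_of_lt (le_trans (le_max_right _ _) h1) hlt
      have hx2 : x c e ≤ x c b := hx.2.2 e b c heb hbc hx1
      have hy2 : y c e ≤ y c b := hy.2.2 e b c heb hbc hy1
      exact le_trans (max_le_max hx2 hy2) (le_tc (θ := maxf x y) hbc)
    · obtain ⟨p, q, hap, hpb, hpq, hbq, hqe⟩ :=
        rtg_split hre (not_lt.mp heb) hab
      rcases lt_or_eq_of_le hbq with hlt2 | heq
      · have h1 : maxf x y b p ≤ tc (maxf x y) b a := le_tc_of_rch hap hpb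
        have hx1 : x b p < s b := lt_of_le_of_lt (le_trans (le_max_left _ _) h1) hlt
        have hy1 : y b p < s b := lt_of_le_of_lt (le_trans (le_max_right _ _) h1) hlt
        by_cases hxq : 0 < x q p
        · have h2 : x q p ≤ x q b := hx.2.2 p b q hpb hlt2 hx1
          have hstep : Stp (maxf x y) b q :=
            ⟨hlt2, lt_of_lt_of_le (lt_of_lt_of_le hxq h2) (le_max_left _ _)⟩
          exact le_tc_of_rch (Relation.ReflTransGen.head hstep hqe) hec
        · have hx0 : x q p = 0 := by omega
          have hyq : 0 < y q p := lt_of_lt_of_le hpq.2 (max_le (by omega) le_rfl)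
          have h2 : y q p ≤ y q b := hy.2.2 p b q hpb hlt2 hy1
          have hstep : Stp (maxf x y) b q :=
            ⟨hlt2, lt_of_lt_of_le (lt_of_lt_of_le hyq h2) (le_max_right _ _)⟩
          exact le_tc_of_rch (Relation.ReflTransGen.head hstep hqe) hec
      · subst heq
        exact le_tc_of_rch hqe hec

lemma pc_inv {s : Fin n → ℕ} {y z : Fin n → Fin n → ℕ}
    (hy : IsSInvFun n s y) (hz : IsSInvFun n s z) :
    IsSInvFun n s (pc s (minf y z)) := by
  refine ⟨?_, ?_, ?_⟩
  · intro a c hac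
    exact le_trans (pc_le hac) (le_trans (min_le_left _ _) (hy.1 a c hac))
  · intro a b c hab hbc hpos
    apply (le_pc_iff (hab.trans hbc)).mpr
    intro e hre hec
    by_cases heb : e < b
    · have h1 : 0 < minf y z b e := lt_of_lt_of_le hpos (pc_le_of_prch hre heb)
      have hy1 : 0 < y b e := lt_of_lt_of_le h1 (min_le_left _ _)
      have hz1 : 0 < z b e := lt_of_lt_of_le h1 (min_le_right _ _)
      have hy2 : y c b ≤ y c e := hy.2.1 e b c heb hbc hy1
      have hz2 : z c b ≤ z c e := hz.2.1 e b c heb hbc hz1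
      exact le_trans (pc_le hbc) (min_le_min hy2 hz2)
    · obtain ⟨p, q, hap, hpb, hpq, hbq, hqe⟩ :=
        rtg_split hre (not_lt.mp heb) hab
      rcases lt_or_eq_of_le hbq with hlt2 | heq
      · have h1 : 0 < minf y z b p := lt_of_lt_of_le hpos (pc_le_of_prch hap hpb)
        have hy1 : 0 < y b p := lt_of_lt_of_le h1 (min_le_left _ _)
        have hz1 : 0 < z b p := lt_of_lt_of_le h1 (min_le_right _ _)
        by_cases hyy : y q p < s q
        · have h2 : y q b ≤ y q p := hy.2.1 p b q hpb hlt2 hy1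
          have hstep : PStp s (minf y z) b q :=
            ⟨hlt2, lt_of_le_of_lt (le_trans (min_le_left _ _) h2) hyy⟩
          exact pc_le_of_prch (Relation.ReflTransGen.head hstep hqe) hec
        · have hzz : z q p < s q := by
            have := hpq.2
            rcases min_lt_iff.mp this with h | h
            · exact absurd h hyy
            · exact h
          have h2 : z q b ≤ z q p := hz.2.1 p b q hpb hlt2 hz1
          have hstep : PStp s (minf y z) b q :=
            ⟨hlt2, lt_of_le_of_lt (le_trans (min_le_right _ _) h2) hzz⟩
          exact pc_le_of_prch (Relation.ReflTransGen.head hstep hqe) hec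
      · subst heq
        exact pc_le_of_prch hqe hec
  · intro a b c hab hbc hlt
    obtain ⟨e0, hre0, he0b, hθe0⟩ := exists_of_pc_lt hlt hab
    have hrb : PRch s (minf y z) a b := hre0.tail ⟨he0b, hθe0⟩
    apply (le_pc_iff hbc).mpr
    intro e hre hec
    exact pc_le_of_prch (hrb.trans hre) hec

lemma tc_le_fun {s : Fin n → ℕ} {θ u : Fin n → Fin n → ℕ}
    (hTrans : ∀ a b c : Fin n, a < b → b < c → 0 < u b a → u c b ≤ u c a)
    (hle : ∀ a c : Fin n, a < c → θ c a ≤ u c a) :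
    ∀ a c : Fin n, a < c → tc θ c a ≤ u c a := by
  intro a c hac
  apply tc_le_iff.mpr
  intro e hre hec
  have key : ∀ b, Rch θ a b → b < c → u c b ≤ u c a := by
    intro b hb
    induction hb with
    | refl => exact fun _ => le_rfl
    | @tail p q h1 hstep ih =>
      intro hqc
      have hpc : p < c := hstep.1.trans hqc
      have hpos : 0 < u q p := lt_of_lt_of_le hstep.2 (hle p q hstep.1)
      exact le_trans (hTrans p q c hstep.1 hqc hpos) (ih hpc)
  exact le_trans (hle e c hec) (key e hre hec)


def ChainL (s : Fin n → ℕ) (θ : Fin n → Fin n → ℕ) : Fin n → List (Fin n) → Fin n → Prop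
  | d, [], b => d = b
  | d, e :: L, b => PStp s θ d e ∧ ChainL s θ e L b

lemma prch_chain {s : Fin n → ℕ} {θ : Fin n → Fin n → ℕ} {d b : Fin n}
    (h : PRch s θ d b) : ∃ L, ChainL s θ d L b := by
  induction h using Relation.ReflTransGen.head_induction_on with
  | refl => exact ⟨[], rfl⟩
  | @head p q hstep hrest ih =>
    obtain ⟨L, hL⟩ := ih
    exact ⟨q :: L, hstep, hL⟩

lemma chainL_le {s : Fin n → ℕ} {θ : Fin n → Fin n → ℕ} :
    ∀ {L : List (Fin n)} {d b : Fin n}, ChainL s θ d L b → d ≤ b := by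
  intro L
  induction L with
  | nil => intro d b h; exact h ▸ le_rfl
  | cons e L' ih => intro d b h; exact le_trans h.1.1.le (ih h.2)

lemma dropFalse {s : Fin n → ℕ} {x m y' z' : Fin n → Fin n → ℕ}
    (hy' : IsSInvFun n s y') (hz' : IsSInvFun n s z')
    {a d e c : Fin n} {v : ℕ}
    (hGood : Rch (maxf x m) a d) (hde : d < e) (hec : e < c)
    (hstep : y' e d < s e)
    (hyd : v ≤ y' c d) (hzd : v ≤ z' c d)
    (hmine : min (y' c e) (z' c e) < v)
    (hIH : z' e d ≤ tc (maxf x m) e d)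
    (hmax : y' c e ≤ tc (maxf x m) c e)
    (hVa : tc (maxf x m) c a < v) : False := by
  have hyce : v ≤ y' c e := hyd.trans (hy'.2.2 d e c hde hec hstep)
  have hzce : z' c e < v := by
    rcases min_lt_iff.mp hmine with h | h
    · omega
    · exact h
  have hse : 0 < s e := lt_of_le_of_lt (Nat.zero_le _) hstep
  have hzed : s e ≤ z' e d := by
    by_contra h
    push_neg at h
    exact absurd (hzd.trans (hz'.2.2 d e c hde hec h)) (not_le.mpr hzce)
  have hVed : 0 < tc (maxf x m) e d := lt_of_lt_of_le (lt_of_lt_of_le hse hzed) hIH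
  obtain ⟨b'', hr'', hb''e, hp''⟩ := exists_of_lt_tc hVed
  have hGe : Rch (maxf x m) a e := (hGood.trans hr'').tail ⟨hb''e, hp''⟩
  have : v ≤ tc (maxf x m) c a := le_trans (hyce.trans hmax) (tc_mono hGe)
  omega

lemma chainE {s : Fin n → ℕ} {x y z m : Fin n → Fin n → ℕ}
    (hy : IsSInvFun n s y) (hz : IsSInvFun n s z)
    {c a : Fin n} {v : ℕ}
    (IH : ∀ c' : Fin n, c' < c → ∀ a', a' < c' →
      y c' a' ≤ tc (maxf x m) c' a' ∧ z c' a' ≤ tc (maxf x m) c' a')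
    (Hmax : ∀ e, a < e → e < c →
      y c e ≤ tc (maxf x m) c e ∧ z c e ≤ tc (maxf x m) c e)
    (hVa : tc (maxf x m) c a < v) :
    ∀ (L : List (Fin n)) (d b' : Fin n), a ≤ d → Rch (maxf x m) a d → d < c →
      v ≤ minf y z c d → ChainL s (minf y z) d L b' → b' < c →
      v ≤ minf y z c b' := by
  intro L
  induction L with
  | nil =>
    intro d b' _ _ _ hmin hch _
    exact hch ▸ hmin
  | cons e L' ihL =>
    intro d b' had hGood hdc hmin hch hbc
    obtain ⟨hstep, hch'⟩ := hch
    have hde : d < e := hstep.1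
    have heb' : e ≤ b' := chainL_le hch' 
    have hec : e < c := lt_of_le_of_lt heb' hbc
    have hae : a < e := lt_of_le_of_lt had hde
    by_cases hdrop : v ≤ minf y z c e
    · by_cases hVed : 0 < tc (maxf x m) e d
      · obtain ⟨b'', hr'', hb'', hp''⟩ := exists_of_lt_tc hVed
        have hGe : Rch (maxf x m) a e := (hGood.trans hr'').tail ⟨hb'', hp''⟩
        exact ihL e b' hae.le hGe hec hdrop hch' hbc
      · rw [not_lt] at hVed
        have hyz0 := IH e hec d hde
        have hy0 : y e d = 0 := by omega
        have hz0 : z e d = 0 := by omega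
        have hse : 0 < s e := lt_of_le_of_lt (Nat.zero_le _) hstep.2
        cases L' with
        | nil => exact hch' ▸ hdrop
        | cons f L'' =>
          obtain ⟨hef, hch''⟩ := hch'
          have hyfd : y f d ≤ y f e := hy.2.2 d e f hde hef.1 (by omega)
          have hzfd : z f d ≤ z f e := hz.2.2 d e f hde hef.1 (by omega)
          have hdf : PStp s (minf y z) d f :=
            ⟨hde.trans hef.1, lt_of_le_of_lt (min_le_min hyfd hzfd) hef.2⟩
          exact ihL d b' had hGood hdc hmin ⟨hdf, hch''⟩ hbc
    · exfalso
      have hmine : minf y z c e < v := not_le.mp hdrop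
      have hIHed := IH e hec d hde
      have hmaxE := Hmax e hae hec
      have hyd : v ≤ y c d := le_trans hmin (min_le_left _ _)
      have hzd : v ≤ z c d := le_trans hmin (min_le_right _ _)
      by_cases hy' : y e d < s e
      · exact dropFalse hy hz hGood hde hec hy' hyd hzd hmine hIHed.2 hmaxE.1 hVa
      · have hz' : z e d < s e := by
          rcases min_lt_iff.mp hstep.2 with h | h
          · exact absurd h hy'
          · exact h
        exact dropFalse hz hy hGood hde hec hz' hzd hyd
          (by rw [min_comm]; exact hmine) hIHed.1 hmaxE.2 hVa


lemma keyStep {s : Fin n → ℕ} {x y z m : Fin n → Fin n → ℕ}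
    (hy : IsSInvFun n s y) (hz : IsSInvFun n s z)
    (Hy : SLe n y (tc (maxf x z)))
    (Hglb : SLe n (pc s (minf y z)) m)
    {c a : Fin n} (hac : a < c)
    (IH : ∀ c' : Fin n, c' < c → ∀ a', a' < c' →
      y c' a' ≤ tc (maxf x m) c' a' ∧ z c' a' ≤ tc (maxf x m) c' a')
    (Hmax : ∀ e, a < e → e < c →
      y c e ≤ tc (maxf x m) c e ∧ z c e ≤ tc (maxf x m) c e)
    (hva : tc (maxf x m) c a < y c a) : False := by
  have h1 : y c a ≤ tc (maxf x z) c a := Hy a c hac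
  obtain ⟨b, hrb, hbc, hθb⟩ := exists_of_lt_tc (show y c a - 1 < tc (maxf x z) c a by omega)
  have hvb : y c a ≤ maxf x z c b := by
    have := hθb
    omega
  -- convert the (x,z)-chain into an (x,m)-chain using the inner induction hypothesis
  have conv : ∀ p q : Fin n, Rch (maxf x z) p q → q < c → Rch (maxf x m) p q := by
    intro p q h
    induction h with
    | refl => exact fun _ => Relation.ReflTransGen.refl
    | @tail b₁ q' hpp hst ihh =>
      intro hqc
      have hb₁c : b₁ < c := hst.1.trans hqc
      have hr1 : Rch (maxf x m) p b₁ := ihh hb₁c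
      by_cases hxp : 0 < x q' b₁
      · exact hr1.tail ⟨hst.1, lt_of_lt_of_le hxp (le_max_left _ _)⟩
      · have hx0 : x q' b₁ = 0 := by omega
        have hzp : 0 < z q' b₁ := lt_of_lt_of_le hst.2 (max_le (by omega) le_rfl)
        have h2 : 0 < tc (maxf x m) q' b₁ :=
          lt_of_lt_of_le hzp (IH q' hqc b₁ hst.1).2
        obtain ⟨b'', hr'', hb''q, hp''⟩ := exists_of_lt_tc h2
        exact hr1.trans (hr''.tail ⟨hb''q, hp''⟩)
  have hrmb : Rch (maxf x m) a b := conv a b hrb hbc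
  have hxb : x c b ≤ tc (maxf x m) c a :=
    le_trans (le_max_left (x c b) (m c b)) (le_tc_of_rch hrmb hbc)
  have hzb : y c a ≤ z c b := by
    rcases max_le_iff.mp (le_refl (maxf x z c b)) with ⟨_, _⟩
    rcases le_max_iff.mp hvb with h | h
    · omega
    · exact h
  have hab' : a ≤ b := rtg_le (fun _ _ h => h.1) hrmb
  have hba : a = b := by
    rcases eq_or_lt_of_le hab' with h | h
    · exact h
    · exfalso
      have hmb := (Hmax b h hbc).2
      have hmono : tc (maxf x m) c b ≤ tc (maxf x m) c a := tc_mono hrmb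
      omega
  subst hba
  -- now y c a ≤ z c a as well; the glb value must be large, contradiction via chainE
  have hmca : m c a ≤ tc (maxf x m) c a :=
    le_trans (le_max_right (x c a) (m c a)) (le_tc (θ := maxf x m) hac)
  have hpca : pc s (minf y z) c a ≤ m c a := Hglb a c hac
  obtain ⟨b', hprb, hb'c, hminb'⟩ :=
    exists_of_pc_lt (show pc s (minf y z) c a < y c a by omega) hac
  obtain ⟨L, hch⟩ := prch_chain hprb
  have hfin := chainE hy hz IH Hmax hva L a b' le_rfl Relation.ReflTransGen.refl hac
    (le_min le_rfl hzb) hch hb'c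
  exact absurd hfin (not_le.mpr hminb')

lemma claimC {s : Fin n → ℕ} {x y z m : Fin n → Fin n → ℕ}
    (hy : IsSInvFun n s y) (hz : IsSInvFun n s z)
    (Hy : SLe n y (tc (maxf x z))) (Hz : SLe n z (tc (maxf x y)))
    (Hglb : SLe n (pc s (minf y z)) m) :
    ∀ c a : Fin n, a < c →
      y c a ≤ tc (maxf x m) c a ∧ z c a ≤ tc (maxf x m) c a := by
  suffices H : ∀ k : ℕ, ∀ c : Fin n, (c : ℕ) < k → ∀ a : Fin n, a < c →
      y c a ≤ tc (maxf x m) c a ∧ z c a ≤ tc (maxf x m) c a by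
    exact fun c a hac => H ((c : ℕ) + 1) c (Nat.lt_succ_self _) a hac
  intro k
  induction k with
  | zero => exact fun c hc => absurd hc (Nat.not_lt_zero _)
  | succ k ihk =>
    intro c hck
    have IH : ∀ c' : Fin n, c' < c → ∀ a', a' < c' →
        y c' a' ≤ tc (maxf x m) c' a' ∧ z c' a' ≤ tc (maxf x m) c' a' := by
      intro c' hc'
      have h1 : (c' : ℕ) < (c : ℕ) := hc'
      exact ihk c' (by omega)
    by_contra hcon
    have hex : ∃ a : Fin n, a < c ∧
        (tc (maxf x m) c a < y c a ∨ tc (maxf x m) c a < z c a) := by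
      by_contra h2
      push_neg at h2
      exact hcon (fun a hac => h2 a hac)
    obtain ⟨a₁, ha₁, hb₁⟩ := hex
    set A : Finset (Fin n) := Finset.univ.filter
      (fun a => a < c ∧ (tc (maxf x m) c a < y c a ∨ tc (maxf x m) c a < z c a))
      with hA
    have hAne : A.Nonempty := ⟨a₁, Finset.mem_filter.mpr ⟨Finset.mem_univ _, ha₁, hb₁⟩⟩
    obtain ⟨-, ha₀c, hdisj⟩ := Finset.mem_filter.mp (A.max'_mem hAne)
    have Hmax : ∀ e, A.max' hAne < e → e < c →
        y c e ≤ tc (maxf x m) c e ∧ z c e ≤ tc (maxf x m) c e := by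
      intro e hae hec
      by_contra hne2
      have hmem : e ∈ A := Finset.mem_filter.mpr ⟨Finset.mem_univ _, hec, by
        rcases not_and_or.mp hne2 with h | h
        exacts [Or.inl (not_le.mp h), Or.inr (not_le.mp h)]⟩
      exact absurd (Finset.le_max' A e hmem) (not_le.mpr hae)
    rcases hdisj with h | h
    · exact keyStep hy hz Hy Hglb ha₀c IH Hmax h
    · have Hglb' : SLe n (pc s (minf z y)) m := by
        have hmm : minf z y = minf y z := by
          funext c' a'
          exact min_comm _ _
        rw [hmm]; exact Hglb
      have IH' : ∀ c' : Fin n, c' < c → ∀ a', a' < c' →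
          z c' a' ≤ tc (maxf x m) c' a' ∧ y c' a' ≤ tc (maxf x m) c' a' :=
        fun c' h1 a' h2 => ⟨(IH c' h1 a' h2).2, (IH c' h1 a' h2).1⟩
      have Hmax' : ∀ e, A.max' hAne < e → e < c →
          z c e ≤ tc (maxf x m) c e ∧ y c e ≤ tc (maxf x m) c e :=
        fun e h1 h2 => ⟨(Hmax e h1 h2).2, (Hmax e h1 h2).1⟩
      exact keyStep hz hy Hz Hglb' ha₀c IH' Hmax' h


lemma sle_trans {g h k : Fin n → Fin n → ℕ} (h1 : SLe n g h) (h2 : SLe n h k) :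
    SLe n g k := fun a c hac => (h1 a c hac).trans (h2 a c hac)

lemma main {s : Fin n → ℕ} {x y z : Fin n → Fin n → ℕ}
    (hx : IsSInvFun n s x) (hy : IsSInvFun n s y) (hz : IsSInvFun n s z)
    {w m : Fin n → Fin n → ℕ}
    (h1 : IsSLub n s w x y) (h2 : IsSLub n s w x z) (h3 : IsSGlb n s m y z) :
    IsSLub n s w x m := by
  obtain ⟨hwI, hxw, hyw, hwmin⟩ := h1
  obtain ⟨-, -, hzw, hwmin2⟩ := h2
  obtain ⟨hmI, hmy, hmz, hmmax⟩ := h3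
  have hxle : ∀ p q : Fin n → Fin n → ℕ, SLe n p (tc (maxf p q)) :=
    fun p q a c hac => le_trans (le_max_left _ _) (le_tc (θ := maxf p q) hac)
  have hqle : ∀ p q : Fin n → Fin n → ℕ, SLe n q (tc (maxf p q)) :=
    fun p q a c hac => le_trans (le_max_right _ _) (le_tc (θ := maxf p q) hac)
  have hVI : IsSInvFun n s (tc (maxf x m)) := tc_inv hx hmI
  have Hy : SLe n y (tc (maxf x z)) :=
    sle_trans hyw (hwmin2 _ (tc_inv hx hz) (hxle x z) (hqle x z))
  have Hz : SLe n z (tc (maxf x y)) :=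
    sle_trans hzw (hwmin _ (tc_inv hx hy) (hxle x y) (hqle x y))
  have hpcy : SLe n (pc s (minf y z)) y :=
    fun a c hac => le_trans (pc_le hac) (min_le_left _ _)
  have hpcz : SLe n (pc s (minf y z)) z :=
    fun a c hac => le_trans (pc_le hac) (min_le_right _ _)
  have Hglb : SLe n (pc s (minf y z)) m := hmmax _ (pc_inv hy hz) hpcy hpcz
  have hC := claimC hy hz Hy Hz Hglb
  have hyV : SLe n y (tc (maxf x m)) := fun a c hac => (hC c a hac).1
  refine ⟨hwI, hxw, sle_trans hmy hyw, ?_⟩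
  intro u huI hxu hmu
  have hVu : SLe n (tc (maxf x m)) u :=
    fun a c hac => tc_le_fun (s := s) huI.2.1
      (fun a' c' h => max_le (hxu a' c' h) (hmu a' c' h)) a c hac
  exact sle_trans (hwmin _ hVI (hxle x m) hyV) hVu

def dualF (s : Fin n → ℕ) (g : Fin n → Fin n → ℕ) : Fin n → Fin n → ℕ :=
  fun c a => s c - g c a

lemma dual_inv {s : Fin n → ℕ} {g : Fin n → Fin n → ℕ} (hg : IsSInvFun n s g) :
    IsSInvFun n s (dualF s g) := by
  refine ⟨fun a c _ => Nat.sub_le _ _, ?_, ?_⟩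
  · intro a b c hab hbc hpos
    have h0 : g b a < s b := by
      have := hpos
      unfold dualF at this
      omega
    exact Nat.sub_le_sub_left (hg.2.2 a b c hab hbc h0) _
  · intro a b c hab hbc hlt
    have h0 : 0 < g b a := by
      have := hlt
      unfold dualF at this
      omega
    exact Nat.sub_le_sub_left (hg.2.1 a b c hab hbc h0) _

lemma dual_sle {s : Fin n → ℕ} {g h : Fin n → Fin n → ℕ} (hle : SLe n g h) :
    SLe n (dualF s h) (dualF s g) :=
  fun a c hac => Nat.sub_le_sub_left (hle a c hac) _

lemma sle_of_dual {s : Fin n → ℕ} {g h : Fin n → Fin n → ℕ}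
    (hgb : ∀ a c : Fin n, a < c → g c a ≤ s c)
    (hhb : ∀ a c : Fin n, a < c → h c a ≤ s c)
    (hle : SLe n (dualF s h) (dualF s g)) : SLe n g h := by
  intro a c hac
  have h1 := hle a c hac
  have h2 := hgb a c hac
  have h3 := hhb a c hac
  unfold dualF at h1
  omega

lemma dual_lub {s : Fin n → ℕ} {w a b : Fin n → Fin n → ℕ}
    (hab : ∀ p q : Fin n, p < q → a q p ≤ s q)
    (hbb : ∀ p q : Fin n, p < q → b q p ≤ s q)
    (h : IsSGlb n s w a b) : IsSLub n s (dualF s w) (dualF s a) (dualF s b) := by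
  obtain ⟨hwI, hwa, hwb, hmax⟩ := h
  refine ⟨dual_inv hwI, dual_sle hwa, dual_sle hwb, ?_⟩
  intro u huI hau hbu
  have h1 : SLe n (dualF s u) a := by
    intro p q hpq
    have := hau p q hpq
    have := hab p q hpq
    unfold dualF at *
    omega
  have h2 : SLe n (dualF s u) b := by
    intro p q hpq
    have := hbu p q hpq
    have := hbb p q hpq
    unfold dualF at *
    omega
  have h3 : SLe n (dualF s u) w := hmax _ (dual_inv huI) h1 h2
  intro p q hpq
  have := h3 p q hpq
  unfold dualF at *
  omega

lemma dual_glb {s : Fin n → ℕ} {w a b : Fin n → Fin n → ℕ}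
    (hab : ∀ p q : Fin n, p < q → a q p ≤ s q)
    (hbb : ∀ p q : Fin n, p < q → b q p ≤ s q)
    (h : IsSLub n s w a b) : IsSGlb n s (dualF s w) (dualF s a) (dualF s b) := by
  obtain ⟨hwI, haw, hbw, hmin⟩ := h
  refine ⟨dual_inv hwI, dual_sle haw, dual_sle hbw, ?_⟩
  intro u huI hua hub
  have h1 : SLe n a (dualF s u) := by
    intro p q hpq
    have := hua p q hpq
    have := hab p q hpq
    unfold dualF at *
    omega
  have h2 : SLe n b (dualF s u) := by
    intro p q hpq
    have := hub p q hpq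
    have := hbb p q hpq
    unfold dualF at *
    omega
  have h3 : SLe n w (dualF s u) := hmin _ (dual_inv huI) h1 h2
  intro p q hpq
  have := h3 p q hpq
  have := huI.1 p q hpq
  unfold dualF at *
  omega

end SWeak

/-- The `s`-weak order is join-semidistributive and meet-semidistributive:
if `w` is simultaneously a least upper bound of `{x,y}` and of `{x,z}`, then
`w` is a least upper bound of `{x,m}` for `m` the greatest lower bound of
`{y,z}`; and dually. -/
theorem s_weak_order_semidistributive (n : ℕ) (hn : 1 ≤ n) (s : Fin n → ℕ)
    (x y z : Fin n → Fin n → ℕ)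
    (hx : IsSInvFun n s x) (hy : IsSInvFun n s y) (hz : IsSInvFun n s z) :
    (∀ w m : Fin n → Fin n → ℕ,
      IsSLub n s w x y → IsSLub n s w x z → IsSGlb n s m y z →
        IsSLub n s w x m) ∧
    (∀ w m : Fin n → Fin n → ℕ,
      IsSGlb n s w x y → IsSGlb n s w x z → IsSLub n s m y z →
        IsSGlb n s w x m) := by
  constructor
  · intro w m h1 h2 h3
    exact SWeak.main hx hy hz h1 h2 h3
  · intro w m h1 h2 h3
    have hmI : IsSInvFun n s m := h3.1
    have hwI : IsSInvFun n s w := h1.1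
    have hd := SWeak.main (SWeak.dual_inv hx) (SWeak.dual_inv hy) (SWeak.dual_inv hz)
      (SWeak.dual_lub hx.1 hy.1 h1) (SWeak.dual_lub hx.1 hz.1 h2)
      (SWeak.dual_glb hy.1 hz.1 h3)
    refine ⟨hwI, h1.2.1, ?_, ?_⟩
    · exact SWeak.sle_of_dual hwI.1 hmI.1 hd.2.2.1
    · intro u huI hux hum
      have h1' := SWeak.dual_sle (s := s) hux
      have h2' := SWeak.dual_sle (s := s) hum
      have h3' := hd.2.2.2 _ (SWeak.dual_inv huI) h1' h2'
      exact SWeak.sle_of_dual huI.1 hwI.1 h3'
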